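/- Let ψ : X1 → X2 be a spectral map of spectral spaces and let 𝒳(ψ) : 𝒳(X1) → 𝒳(X2) be the induced map C ↦ ψ(C)^gen. If ψ is a topological embedding (respectively, a homeomorphism), then 𝒳(ψ) is a topological embedding (respectively, a homeomorphism). -/
import Mathlib


open Set TopologicalSpace Topology

/-- A subset of a topological space is *inverse-closed* if it is an intersection of a
family of quasi-compact open subsets. -/
def InvClosed {X : Type*} [TopologicalSpace X] (Y : Set X) : Prop :=
  ∃ 𝒪 : Set (Set X), (∀ U ∈ 𝒪, IsOpen U ∧ IsCompact U) ∧ Y = ⋂₀ 𝒪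

/-- A subset is *saturated* if it is an intersection of open sets. -/
def IsSatd {X : Type*} [TopologicalSpace X] (Y : Set X) : Prop :=
  ∃ 𝒪 : Set (Set X), (∀ U ∈ 𝒪, IsOpen U) ∧ Y = ⋂₀ 𝒪

/-- A topological space is *spectral* if it is T0, quasi-compact, sober, and the
quasi-compact open subsets form a basis closed under finite intersections. -/
def IsSpectralSpace (X : Type*) [TopologicalSpace X] : Prop :=
  T0Space X ∧ CompactSpace X ∧ QuasiSober X ∧
    IsTopologicalBasis {U : Set X | IsOpen U ∧ IsCompact U} ∧
    ∀ U V : Set X, IsOpen U → IsCompact U → IsOpen V → IsCompact V → IsCompact (U ∩ V)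

/-- `𝒳(X)`: the nonempty inverse-closed subsets of `X`. -/
abbrev XCal (X : Type*) [TopologicalSpace X] : Type _ :=
  {Y : Set X // Y.Nonempty ∧ InvClosed Y}

/-- The Zariski topology on `𝒳(X)`, with basic open sets `𝒰(Ω) = {Y : Y ⊆ Ω}` for `Ω`
quasi-compact open in `X`. -/
instance XCal.instTop (X : Type*) [TopologicalSpace X] : TopologicalSpace (XCal X) :=
  generateFrom {S : Set (XCal X) | ∃ Ω : Set X, IsOpen Ω ∧ IsCompact Ω ∧
    S = {Y : XCal X | (Y : Set X) ⊆ Ω}}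

/-- The specialization-type order: `x ≤ y` iff `y ∈ closure {x}`. -/
def spord {X : Type*} [TopologicalSpace X] (x y : X) : Prop := y ∈ closure {x}

/-- Closure under generizations of a set `S`: all points `z ≤ s` for some `s ∈ S`. -/
def genOf {X : Type*} [TopologicalSpace X] (S : Set X) : Set X :=
  {z : X | ∃ s ∈ S, spord z s}

/-- A map is *spectral* if preimages of quasi-compact open sets are quasi-compact open. -/
def SpecMap {X Y : Type*} [TopologicalSpace X] [TopologicalSpace Y] (f : X → Y) : Prop :=
  ∀ Ω : Set Y, IsOpen Ω → IsCompact Ω → IsOpen (f ⁻¹' Ω) ∧ IsCompact (f ⁻¹' Ω)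

/-- The constructible topology on a spectral space: generated by the quasi-compact open
sets together with their complements. -/
def constructibleTop (X : Type*) [TopologicalSpace X] : TopologicalSpace X :=
  generateFrom ({U : Set X | IsOpen U ∧ IsCompact U} ∪
    {S : Set X | ∃ U : Set X, IsOpen U ∧ IsCompact U ∧ S = Uᶜ})

/-- `s` is the supremum of `S` for the order induced by the topology. -/
def IsSupOf {X : Type*} [TopologicalSpace X] (S : Set X) (s : X) : Prop :=
  (∀ c ∈ S, spord c s) ∧ ∀ t : X, (∀ c ∈ S, spord c t) → spord s t

/-- A map is sup-preserving if it sends existing finite suprema to suprema. -/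
def SupPreserving {X Y : Type*} [TopologicalSpace X] [TopologicalSpace Y] (f : X → Y) : Prop :=
  ∀ F : Set X, F.Finite → ∀ s : X, IsSupOf F s → IsSupOf (f '' F) (f s)

/-- A map is open onto its image. -/
def OpenOntoImage {X Y : Type*} [TopologicalSpace X] [TopologicalSpace Y] (f : X → Y) : Prop :=
  ∀ V : Set X, IsOpen V → ∃ W : Set Y, IsOpen W ∧ f '' V = W ∩ Set.range f


section Aux

variable {X : Type*} [TopologicalSpace X]

lemma spord_self (x : X) : spord x x := subset_closure rfl

lemma open_gen {Ω : Set X} (hΩ : IsOpen Ω) {z s : X} (hs : s ∈ Ω) (h : spord z s) : z ∈ Ω := by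
  obtain ⟨w, hwΩ, hwz⟩ := mem_closure_iff.mp h Ω hΩ hs
  rwa [← hwz]

lemma subset_genOf (S : Set X) : S ⊆ genOf S := fun x hx => ⟨x, hx, spord_self x⟩

lemma genOf_subset_open {S Ω : Set X} (hΩ : IsOpen Ω) : genOf S ⊆ Ω ↔ S ⊆ Ω := by
  constructor
  · exact fun h => (subset_genOf S).trans h
  · rintro h z ⟨s, hs, hzs⟩
    exact open_gen hΩ (h hs) hzs

lemma invClosed_satd {Y : Set X} (h : InvClosed Y) : IsSatd Y := by
  obtain ⟨𝒪, h1, h2⟩ := h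
  exact ⟨𝒪, fun U hU => (h1 U hU).1, h2⟩

lemma satd_gen {Y : Set X} (h : IsSatd Y) {z s : X} (hs : s ∈ Y) (hzs : spord z s) : z ∈ Y := by
  obtain ⟨𝒪, h1, rfl⟩ := h
  exact fun U hU => open_gen (h1 U hU) (hs U hU) hzs

lemma XCal.isOpen_basic {Ω : Set X} (h1 : IsOpen Ω) (h2 : IsCompact Ω) :
    IsOpen {Y : XCal X | (Y : Set X) ⊆ Ω} :=
  isOpen_generateFrom_of_mem ⟨Ω, h1, h2, rfl⟩

end Aux

/-- If the spectral map `ψ : X₁ → X₂` is a topological embedding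
(resp. a homeomorphism), then so is the induced map `𝒳(ψ) : C ↦ ψ(C)^gen`. -/
theorem stmt14 {X₁ X₂ : Type*} [TopologicalSpace X₁] [TopologicalSpace X₂]
    (hX₁ : IsSpectralSpace X₁) (hX₂ : IsSpectralSpace X₂)
    (ψ : X₁ → X₂) (hψ : SpecMap ψ)
    (Ψ : XCal X₁ → XCal X₂)
    (hΨ : ∀ C : XCal X₁, (Ψ C : Set X₂) = genOf (ψ '' (C : Set X₁))) :
    (IsEmbedding ψ → IsEmbedding Ψ) ∧ (IsHomeomorph ψ → IsHomeomorph Ψ) := by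
  have key : ∀ (C : XCal X₁) (Ω : Set X₂), IsOpen Ω →
      ((Ψ C : Set X₂) ⊆ Ω ↔ (C : Set X₁) ⊆ ψ ⁻¹' Ω) := by
    intro C Ω hΩ
    rw [hΨ C, genOf_subset_open hΩ, image_subset_iff]
  have hcont : Continuous Ψ := by
    apply continuous_generateFrom_iff.mpr
    rintro S ⟨Ω, hΩo, hΩc, rfl⟩
    have : Ψ ⁻¹' {Y : XCal X₂ | (Y : Set X₂) ⊆ Ω} = {C : XCal X₁ | (C : Set X₁) ⊆ ψ ⁻¹' Ω} := by
      ext C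
      exact key C Ω hΩo
    rw [this]
    exact XCal.isOpen_basic (hψ Ω hΩo hΩc).1 (hψ Ω hΩo hΩc).2
  have hemb_main : IsEmbedding ψ → IsEmbedding Ψ := by
    intro hemb
    -- injectivity
    have hinj : Function.Injective Ψ := by
      intro C D h
      have hCD : ∀ C D : XCal X₁, Ψ C = Ψ D → (C : Set X₁) ⊆ (D : Set X₁) := by
        intro C D h x hx
        have h1 : ψ x ∈ (Ψ D : Set X₂) := by
          rw [← h, hΨ C]
          exact subset_genOf _ (mem_image_of_mem ψ hx)
        rw [hΨ D] at h1
        obtain ⟨s, ⟨d, hd, rfl⟩, hs⟩ := h1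
        -- hs : spord (ψ x) (ψ d), i.e. ψ d ∈ closure {ψ x}
        have hxd : spord x d := by
          have := hemb.toIsInducing.closure_eq_preimage_closure_image ({x} : Set X₁)
          unfold spord
          rw [this, mem_preimage, image_singleton]
          exact hs
        exact satd_gen (invClosed_satd D.2.2) hd hxd
      exact Subtype.ext (Subset.antisymm (hCD C D h) (hCD D C h.symm))
    -- inducing
    have hind : IsInducing Ψ := by
      refine ⟨le_antisymm (continuous_iff_le_induced.mp hcont) (le_generateFrom ?_)⟩
      rintro S ⟨V, hVo, hVc, rfl⟩
      -- find qc open Ω in X₂ with V = ψ ⁻¹' Ω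
      obtain ⟨W, hWo, hWV⟩ := (hemb.toIsInducing.isOpen_iff).mp hVo
      have hb := hX₂.2.2.2.1
      have hchoice : ∀ x : V, ∃ Ω : Set X₂, (IsOpen Ω ∧ IsCompact Ω) ∧ ψ (x : X₁) ∈ Ω ∧ Ω ⊆ W := by
        intro x
        have hx : ψ (x : X₁) ∈ W := by
          have : (x : X₁) ∈ ψ ⁻¹' W := hWV ▸ x.2
          exact this
        obtain ⟨Ω, hΩ, hmem, hsub⟩ := hb.exists_subset_of_mem_open hx hWo
        exact ⟨Ω, hΩ, hmem, hsub⟩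
      choose Ω hΩ hmem hsub using hchoice
      have hcover : V ⊆ ⋃ x : V, ψ ⁻¹' Ω x := by
        intro y hy
        exact mem_iUnion.mpr ⟨⟨y, hy⟩, hmem ⟨y, hy⟩⟩
      obtain ⟨t, ht⟩ := hVc.elim_finite_subcover (fun x : V => ψ ⁻¹' Ω x)
        (fun x => (hψ (Ω x) (hΩ x).1 (hΩ x).2).1) hcover
      set Ω₀ : Set X₂ := ⋃ x ∈ t, Ω x with hΩ₀
      have hΩ₀o : IsOpen Ω₀ := isOpen_biUnion fun x _ => (hΩ x).1
      have hΩ₀c : IsCompact Ω₀ := t.finite_toSet.isCompact_biUnion fun x _ => (hΩ x).2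
      have hVeq : V = ψ ⁻¹' Ω₀ := by
        apply Subset.antisymm
        · intro y hy
          have := ht hy
          simp only [mem_iUnion] at this ⊢
          obtain ⟨x, hxt, hyx⟩ := this
          exact mem_biUnion hxt hyx
        · intro y hy
          have : ψ y ∈ W := by
            simp only [hΩ₀, mem_iUnion, mem_preimage] at hy
            obtain ⟨x, hxt, hyx⟩ := hy
            exact hsub x hyx
          rw [← hWV]; exact this
      -- now {Y | Y ⊆ V} = Ψ ⁻¹' {Y | Y ⊆ Ω₀}
      apply isOpen_induced_iff.mpr
      refine ⟨{Y : XCal X₂ | (Y : Set X₂) ⊆ Ω₀}, XCal.isOpen_basic hΩ₀o hΩ₀c, ?_⟩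
      ext C
      simp only [mem_preimage, mem_setOf_eq]
      rw [key C Ω₀ hΩ₀o, ← hVeq]
    exact ⟨hind, hinj⟩
  refine ⟨hemb_main, ?_⟩
  intro hhom
  apply isHomeomorph_iff_isEmbedding_surjective.mpr
  refine ⟨hemb_main hhom.isEmbedding, ?_⟩
  -- surjectivity
  intro D
  obtain ⟨hDne, 𝒪, h𝒪, hD⟩ := D.2
  have hsurj : Function.Surjective ψ := hhom.surjective
  have hC : InvClosed (ψ ⁻¹' (D : Set X₂)) := by
    refine ⟨(fun U => ψ ⁻¹' U) '' 𝒪, ?_, ?_⟩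
    · rintro U ⟨U', hU', rfl⟩
      exact hψ U' (h𝒪 U' hU').1 (h𝒪 U' hU').2
    · rw [sInter_image, hD, preimage_sInter]
  have hCne : (ψ ⁻¹' (D : Set X₂)).Nonempty := by
    obtain ⟨d, hd⟩ := hDne
    obtain ⟨x, rfl⟩ := hsurj d
    exact ⟨x, hd⟩
  refine ⟨⟨ψ ⁻¹' (D : Set X₂), hCne, hC⟩, ?_⟩
  apply Subtype.ext
  rw [hΨ]
  simp only
  rw [image_preimage_eq _ hsurj]
  apply Subset.antisymm
  · rintro z ⟨s, hs, hzs⟩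
    exact satd_gen (invClosed_satd D.2.2) hs hzs
  · exact subset_genOf _
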